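/- Let A be a commutative local ring with maximal ideal m and residue field κ = A/m, and let σ: A^α → A^β be an A-linear map. If the induced κ-linear map κ^α → κ^β, obtained by reducing the matrix of σ modulo m, has rank at least r, then the image of σ contains a free A-submodule of rank r which is a direct summand of A^β. -/

import Mathlib

open Matrix IsLocalRing

lemma exists_subfamily_linearIndependent' {K V : Type*} [Field K] [AddCommGroup V] [Module K V]
    {ι : Type*} [Fintype ι] (w : ι → V) (r : ℕ)
    (hr : r ≤ Module.finrank K (Submodule.span K (Set.range w))) :
    ∃ f : Fin r → ι, LinearIndependent K (w ∘ f) := by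
  obtain ⟨b, hbsub, hbspan, hbind⟩ := exists_linearIndependent K (Set.range w)
  have hbfin : b.Finite := (Set.finite_range w).subset hbsub
  haveI := hbfin.fintype
  have hcard : Module.finrank K (Submodule.span K b) = b.toFinset.card :=
    finrank_span_set_eq_card hbind
  have hr' : r ≤ Fintype.card b := by
    rw [← Set.toFinset_card, ← hcard, hbspan]
    exact hr
  let e : Fin r → b := fun j => (Fintype.equivFin b).symm (Fin.castLE hr' j)
  have he : Function.Injective e := fun a c hac => by
    have := (Fintype.equivFin b).symm.injective hac
    exact Fin.castLE_injective hr' this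
  have hind : LinearIndependent K (fun j : Fin r => ((e j : V))) :=
    hbind.comp e he
  have hch : ∀ j : Fin r, ∃ i : ι, w i = (e j : V) := fun j => hbsub (e j).2
  refine ⟨fun j => (hch j).choose, ?_⟩
  have : w ∘ (fun j => (hch j).choose) = fun j : Fin r => ((e j : V)) := by
    funext j; exact (hch j).choose_spec
  rw [this]; exact hind

lemma exists_isUnit_submatrix' {K : Type*} [Field K] {β α : ℕ}
    (M : Matrix (Fin β) (Fin α) K) (r : ℕ) (hr : r ≤ M.rank) :
    ∃ (g : Fin r → Fin β) (f : Fin r → Fin α), IsUnit (M.submatrix g f) := by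
  rw [Matrix.rank_eq_finrank_span_cols] at hr
  obtain ⟨f, hf⟩ := exists_subfamily_linearIndependent' Mᵀ r hr
  have hCt : ((M.submatrix id f)ᵀ) = Mᵀ ∘ f := rfl
  have hrankCt : ((M.submatrix id f)ᵀ).rank = r := by
    rw [hCt]
    have h1 := LinearIndependent.rank_matrix hf
    simp at h1
    exact h1
  have hrankC : r ≤ (M.submatrix id f).rank := by
    rw [← Matrix.rank_transpose, hrankCt]
  rw [Matrix.rank_eq_finrank_span_row] at hrankC
  obtain ⟨g, hg⟩ := exists_subfamily_linearIndependent' (M.submatrix id f) r hrankC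
  refine ⟨g, f, ?_⟩
  rw [← Matrix.linearIndependent_rows_iff_isUnit]
  exact hg

theorem image_contains_free_direct_summand
    {A : Type*} [CommRing A] [IsLocalRing A] {α β : ℕ}
    (σ : Matrix (Fin β) (Fin α) A) (r : ℕ)
    (h : r ≤ (σ.map (IsLocalRing.residue A)).rank) :
    ∃ P : Submodule A (Fin β → A), P ≤ LinearMap.range σ.mulVecLin ∧
      Nonempty (P ≃ₗ[A] (Fin r → A)) ∧ ∃ Q : Submodule A (Fin β → A), IsCompl P Q := by
  obtain ⟨g, f, hunit⟩ := exists_isUnit_submatrix' (σ.map (IsLocalRing.residue A)) r h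
  -- Transfer unit-ness of determinant from κ to A
  set N : Matrix (Fin r) (Fin r) A := σ.submatrix g f with hNdef
  have hmap : (σ.map (IsLocalRing.residue A)).submatrix g f = N.map (IsLocalRing.residue A) := rfl
  have hdetκ : IsUnit ((N.map (IsLocalRing.residue A)).det) := by
    rw [← hmap]; exact (Matrix.isUnit_iff_isUnit_det _).mp hunit
  have hdet : IsUnit N.det := by
    have : (N.map (IsLocalRing.residue A)).det = IsLocalRing.residue A N.det := by
      rw [← RingHom.mapMatrix_apply, ← RingHom.map_det]
    rw [this] at hdetκ
    exact isUnit_of_map_unit (IsLocalRing.residue A) _ hdetκ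
  -- the injection
  set C : Matrix (Fin β) (Fin r) A := σ.submatrix id f with hCdef
  set S : Matrix (Fin r) (Fin β) A := (1 : Matrix (Fin β) (Fin β) A).submatrix g id with hSdef
  set E : Matrix (Fin α) (Fin r) A := (1 : Matrix (Fin α) (Fin α) A).submatrix id f with hEdef
  have hSC : S * C = N := by
    ext i j
    simp [hSdef, hCdef, hNdef, Matrix.mul_apply, Matrix.one_apply]
  have hσE : σ * E = C := by
    ext i j
    simp [hEdef, hCdef, Matrix.mul_apply, Matrix.one_apply]
  set i : (Fin r → A) →ₗ[A] (Fin β → A) := C.mulVecLin with hidef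
  set l : (Fin β → A) →ₗ[A] (Fin r → A) := (N⁻¹ * S).mulVecLin with hldef
  have hli : ∀ x, l (i x) = x := by
    intro x
    have : (N⁻¹ * S * C).mulVecLin = ((1 : Matrix (Fin r) (Fin r) A)).mulVecLin := by
      rw [Matrix.mul_assoc, hSC, Matrix.nonsing_inv_mul N hdet]
    have h2 := congrFun (congrArg (fun (φ : (Fin r → A) →ₗ[A] (Fin r → A)) => φ.toFun) this) x
    simpa [hldef, hidef, Matrix.mulVecLin_mul] using h2
  have hinj : Function.Injective i := Function.LeftInverse.injective hli
  refine ⟨LinearMap.range i, ?_, ?_, ?_⟩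
  · have : i = σ.mulVecLin ∘ₗ E.mulVecLin := by
      rw [hidef, ← hσE, Matrix.mulVecLin_mul]
    rw [this]
    exact LinearMap.range_comp_le_range _ _
  · exact ⟨(LinearEquiv.ofInjective i hinj).symm⟩
  · set π : (Fin β → A) →ₗ[A] LinearMap.range i :=
      (i ∘ₗ l).codRestrict (LinearMap.range i) (fun x => ⟨l x, rfl⟩) with hπdef
    have hπ : ∀ x : LinearMap.range i, π x = x := by
      rintro ⟨x, y, rfl⟩
      apply Subtype.ext
      exact congrArg i (hli y)
    exact ⟨_, LinearMap.isCompl_of_proj hπ⟩
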